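/- For every n ≥ 1, the set G of bijections f : ℤ → ℤ satisfying f(x + n) = f(x) + n for all x ∈ ℤ is a subgroup of the permutation group of ℤ under composition, and G is isomorphic as a group to the semidirect product (Fin n → ℤ) ⋊ Equiv.Perm (Fin n), where the symmetric group Equiv.Perm (Fin n) acts on the additive group Fin n → ℤ by permuting coordinates. -/

import Mathlib

theorem Equiv.Perm.apply_inv_self {α : Type*} (f : Equiv.Perm α) (x : α) : f (f⁻¹ x) = x :=
  f.apply_symm_apply x

theorem Equiv.Perm.inv_apply_self {α : Type*} (f : Equiv.Perm α) (x : α) : f⁻¹ (f x) = x :=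
  f.symm_apply_apply x

namespace EASG
variable {n : ℕ}

def res (hn : 0 < n) (x : ℤ) : Fin n :=
  ⟨(x % (n : ℤ)).toNat, by
    have h1 : 0 ≤ x % (n : ℤ) := Int.emod_nonneg x (by exact_mod_cast hn.ne')
    have h2 : x % (n : ℤ) < (n : ℤ) := Int.emod_lt_of_pos x (by exact_mod_cast hn)
    omega⟩

lemma res_coe (hn : 0 < n) (x : ℤ) : ((res hn x : Fin n) : ℤ) = x % (n : ℤ) := by
  have h1 : 0 ≤ x % (n : ℤ) := Int.emod_nonneg x (by exact_mod_cast hn.ne')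
  simp only [res]
  omega

lemma res_eq_of_emod (hn : 0 < n) {x y : ℤ} (h : x % (n : ℤ) = y % (n : ℤ)) :
    res hn x = res hn y := by
  apply Fin.ext
  simp only [res, h]

lemma res_intCast (hn : 0 < n) (i : Fin n) : res hn ((i : ℤ)) = i := by
  apply Fin.ext
  simp only [res]
  have : ((i : ℤ)) % (n : ℤ) = (i : ℤ) := by
    apply Int.emod_eq_of_lt (by positivity) (by exact_mod_cast i.isLt)
  omega

lemma res_add_mul (hn : 0 < n) (x k : ℤ) : res hn (x + (n : ℤ) * k) = res hn x :=
  res_eq_of_emod hn (Int.add_mul_emod_self_left x (n:ℤ) k)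

def F (hn : 0 < n) (a : Fin n → ℤ) (σ : Equiv.Perm (Fin n)) (x : ℤ) : ℤ :=
  x - (res hn x : ℤ) + (σ (res hn x) : ℤ) + (n : ℤ) * a (σ (res hn x))

lemma F_eq (hn : 0 < n) (a : Fin n → ℤ) (σ : Equiv.Perm (Fin n)) (x : ℤ) :
    F hn a σ x = ((σ (res hn x) : Fin n) : ℤ) + (n : ℤ) * (x / n + a (σ (res hn x))) := by
  have hx : ((res hn x : Fin n) : ℤ) = x % (n : ℤ) := res_coe hn x
  have h := Int.emod_add_mul_ediv x (n : ℤ)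
  simp only [F, hx]
  ring_nf
  linarith

lemma res_F (hn : 0 < n) (a : Fin n → ℤ) (σ : Equiv.Perm (Fin n)) (x : ℤ) :
    res hn (F hn a σ x) = σ (res hn x) := by
  rw [F_eq, res_add_mul, res_intCast]

lemma F_comp (hn : 0 < n) (a b : Fin n → ℤ) (σ τ : Equiv.Perm (Fin n)) (x : ℤ) :
    F hn a σ (F hn b τ x) = F hn (fun j => a j + b (σ⁻¹ j)) (σ * τ) x := by
  have h1 : res hn (F hn b τ x) = τ (res hn x) := res_F hn b τ x
  simp only [F] at h1 ⊢
  rw [h1]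
  simp only [Equiv.Perm.mul_apply, Equiv.Perm.inv_apply_self]
  ring

lemma F_one (hn : 0 < n) (x : ℤ) : F hn (fun _ => 0) 1 x = x := by
  simp [F]

def Fperm (hn : 0 < n) (a : Fin n → ℤ) (σ : Equiv.Perm (Fin n)) : Equiv.Perm ℤ where
  toFun := F hn a σ
  invFun := F hn (fun j => -a (σ j)) σ⁻¹
  left_inv := fun x => by
    have h := F_comp hn (fun j => -a (σ j)) a σ⁻¹ σ x
    simp only [inv_inv, inv_mul_cancel, neg_add_cancel] at h
    rw [h]
    exact F_one hn x
  right_inv := fun x => by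
    have h := F_comp hn a (fun j => -a (σ j)) σ σ⁻¹ x
    simp only [Equiv.Perm.apply_inv_self, add_neg_cancel, mul_inv_cancel] at h
    rw [h]
    exact F_one hn x

lemma Fperm_apply (hn : 0 < n) (a : Fin n → ℤ) (σ : Equiv.Perm (Fin n)) (x : ℤ) :
    Fperm hn a σ x = F hn a σ x := rfl

lemma translate (g : Equiv.Perm ℤ) (hg : ∀ x : ℤ, g (x + (n : ℤ)) = g x + n)
    (x k : ℤ) : g (x + (n : ℤ) * k) = g x + (n : ℤ) * k := by
  have hsub : ∀ y : ℤ, g (y - (n : ℤ)) = g y - n := by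
    intro y
    have := hg (y - (n : ℤ))
    rw [sub_add_cancel] at this
    linarith
  induction k using Int.induction_on with
  | zero => simp
  | succ k ih =>
      rw [show x + (n : ℤ) * ((k : ℤ) + 1) = (x + (n : ℤ) * k) + n by ring, hg, ih]
      ring
  | pred k ih =>
      rw [show x + (n : ℤ) * (-(k : ℤ) - 1) = (x + (n : ℤ) * (-(k : ℤ))) - n by ring,
        hsub, ih]
      ring
end EASG

open EASG in
theorem extended_affine_symmetric_group (n : ℕ) (hn : 1 ≤ n)
    (φ : Equiv.Perm (Fin n) →* MulAut (Multiplicative (Fin n → ℤ)))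
    (hφ : ∀ (σ : Equiv.Perm (Fin n)) (a : Multiplicative (Fin n → ℤ)) (i : Fin n),
      Multiplicative.toAdd (φ σ a) i = Multiplicative.toAdd a (σ⁻¹ i)) :
    ∃ G : Subgroup (Equiv.Perm ℤ),
      (G : Set (Equiv.Perm ℤ)) = {f : Equiv.Perm ℤ | ∀ x : ℤ, f (x + n) = f x + n} ∧
      Nonempty (G ≃* SemidirectProduct (Multiplicative (Fin n → ℤ)) (Equiv.Perm (Fin n)) φ) := by
  classical
  have hn' : 0 < n := hn
  have hnz : (n : ℤ) ≠ 0 := by exact_mod_cast hn'.ne'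
  set G : Subgroup (Equiv.Perm ℤ) :=
    { carrier := {f : Equiv.Perm ℤ | ∀ x : ℤ, f (x + n) = f x + n}
      one_mem' := fun x => rfl
      mul_mem' := by
        intro a b ha hb x
        simp only [Equiv.Perm.mul_apply]
        rw [hb x, ha (b x)]
      inv_mem' := by
        intro f hf x
        apply f.injective
        rw [Equiv.Perm.apply_inv_self, hf, Equiv.Perm.apply_inv_self] } with hGdef
  refine ⟨G, rfl, ?_⟩
  have mem_G : ∀ (a : Fin n → ℤ) (σ : Equiv.Perm (Fin n)), Fperm hn' a σ ∈ G := by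
    intro a σ x
    have hres : res hn' (x + (n : ℤ)) = res hn' x := by
      simpa using res_add_mul hn' x 1
    show F hn' a σ (x + (n : ℤ)) = F hn' a σ x + n
    simp only [F, hres]
    ring
  let Φ : SemidirectProduct (Multiplicative (Fin n → ℤ)) (Equiv.Perm (Fin n)) φ →* G :=
  { toFun := fun p => ⟨Fperm hn' (Multiplicative.toAdd p.left) p.right, mem_G _ _⟩
    map_one' := by
      refine Subtype.ext (Equiv.ext fun x => ?_)
      show F hn' (Multiplicative.toAdd (1 : Multiplicative (Fin n → ℤ))) 1 x = x
      exact F_one hn' x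
    map_mul' := by
      intro p q
      refine Subtype.ext (Equiv.ext fun x => ?_)
      have hl : (Multiplicative.toAdd ((p * q).left)) =
          fun j => Multiplicative.toAdd p.left j +
            Multiplicative.toAdd q.left (p.right⁻¹ j) := by
        funext j
        rw [SemidirectProduct.mul_left, toAdd_mul, Pi.add_apply, hφ]
      show F hn' (Multiplicative.toAdd ((p * q).left)) ((p * q).right) x =
        F hn' (Multiplicative.toAdd p.left) p.right
          (F hn' (Multiplicative.toAdd q.left) q.right x)
      rw [hl, SemidirectProduct.mul_right]
      exact (F_comp hn' _ _ _ _ x).symm }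
  have hinj : Function.Injective Φ := by
    rw [injective_iff_map_eq_one]
    intro p hp
    have hp' : ∀ x : ℤ, F hn' (Multiplicative.toAdd p.left) p.right x = x := by
      intro x
      have := congrArg (fun g : G => (g : Equiv.Perm ℤ) x) hp
      simpa [Φ, Fperm_apply] using this
    have key : ∀ i : Fin n, p.right i = i ∧ Multiplicative.toAdd p.left (p.right i) = 0 := by
      intro i
      have h := hp' ((i : Fin n) : ℤ)
      rw [F, res_intCast] at h
      set j := p.right i with hj
      set c := Multiplicative.toAdd p.left j with hc
      have h' : ((j : Fin n) : ℤ) - (i : ℤ) = (n : ℤ) * (-c) := by linarith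
      have hdvd : (n : ℤ) ∣ ((j : Fin n) : ℤ) - (i : ℤ) := ⟨-c, h'⟩
      have habs : |((j : Fin n) : ℤ) - (i : ℤ)| < (n : ℤ) := by
        have h1 : ((j : Fin n) : ℤ) < n := by exact_mod_cast j.isLt
        have h2 : ((i : Fin n) : ℤ) < n := by exact_mod_cast i.isLt
        have h3 : (0 : ℤ) ≤ (j : ℤ) := by positivity
        have h4 : (0 : ℤ) ≤ (i : ℤ) := by positivity
        rw [abs_lt]; omega
      have hz : ((j : Fin n) : ℤ) - (i : ℤ) = 0 := Int.eq_zero_of_abs_lt_dvd hdvd habs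
      have hji : j = i := by
        apply Fin.ext
        have : ((j : Fin n) : ℤ) = (i : ℤ) := by linarith
        exact_mod_cast this
      refine ⟨hji, ?_⟩
      have : (n : ℤ) * c = 0 := by
        rw [hz] at h'
        linarith
      rcases mul_eq_zero.mp this with h | h
      · exact absurd h hnz
      · exact h
    have hright : p.right = 1 := by
      apply Equiv.ext
      intro i
      exact (key i).1
    have hleft : p.left = 1 := by
      apply Multiplicative.toAdd.injective
      funext i
      have := (key i).2
      rwa [(key i).1] at this
    cases p with
    | mk l r => simp only at hleft hright; rw [hleft, hright]; rfl
  have hsurj : Function.Surjective Φ := by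
    rintro ⟨f, hf⟩
    have hf' : ∀ x : ℤ, f (x + (n : ℤ)) = f x + n := hf
    have hfinv : ∀ x : ℤ, f⁻¹ (x + (n : ℤ)) = f⁻¹ x + n := by
      intro x
      apply f.injective
      rw [Equiv.Perm.apply_inv_self]
      have : f (f⁻¹ x + (n : ℤ)) = f (f⁻¹ x) + n := hf' (f⁻¹ x)
      rw [this, Equiv.Perm.apply_inv_self]
    let σ : Equiv.Perm (Fin n) :=
    { toFun := fun i => res hn' (f (i : ℤ))
      invFun := fun i => res hn' (f⁻¹ (i : ℤ))
      left_inv := by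
        intro i
        have h1 : ((res hn' (f (i : ℤ)) : Fin n) : ℤ) =
            f (i : ℤ) + (n : ℤ) * (-(f (i : ℤ) / n)) := by
          rw [res_coe]
          have := Int.emod_add_mul_ediv (f (i : ℤ)) (n : ℤ)
          linarith
        simp only
        rw [h1, translate f⁻¹ hfinv, Equiv.Perm.inv_apply_self, res_add_mul, res_intCast]
      right_inv := by
        intro i
        have h1 : ((res hn' (f⁻¹ (i : ℤ)) : Fin n) : ℤ) =
            f⁻¹ (i : ℤ) + (n : ℤ) * (-(f⁻¹ (i : ℤ) / n)) := by
          rw [res_coe]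
          have := Int.emod_add_mul_ediv (f⁻¹ (i : ℤ)) (n : ℤ)
          linarith
        simp only
        rw [h1, translate f hf', Equiv.Perm.apply_inv_self, res_add_mul, res_intCast] }
    let a : Fin n → ℤ := fun j => (f ((σ.symm j : Fin n) : ℤ) - (j : ℤ)) / n
    refine ⟨⟨Multiplicative.ofAdd a, σ⟩, ?_⟩
    refine Subtype.ext (Equiv.ext fun x => ?_)
    show F hn' (Multiplicative.toAdd (Multiplicative.ofAdd a)) σ x = f x
    set r := res hn' x with hr
    have hσr : ((σ r : Fin n) : ℤ) = f ((r : Fin n) : ℤ) % (n : ℤ) := by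
      show ((res hn' (f ((r : Fin n) : ℤ)) : Fin n) : ℤ) = _
      exact res_coe hn' _
    have hdiv : f ((r : Fin n) : ℤ) - ((σ r : Fin n) : ℤ) =
        (n : ℤ) * (f ((r : Fin n) : ℤ) / n) := by
      rw [hσr]
      have := Int.emod_add_mul_ediv (f ((r : Fin n) : ℤ)) (n : ℤ)
      linarith
    have key1 : (n : ℤ) * a (σ r) = f ((r : Fin n) : ℤ) - ((σ r : Fin n) : ℤ) := by
      have hsymm : σ.symm (σ r) = r := Equiv.symm_apply_apply σ r
      show (n : ℤ) * ((f ((σ.symm (σ r) : Fin n) : ℤ) - ((σ r : Fin n) : ℤ)) / n) = _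
      rw [hsymm, hdiv, Int.mul_ediv_cancel_left _ hnz]
    have key2 : f x = f ((r : Fin n) : ℤ) + (x - ((r : Fin n) : ℤ)) := by
      have hx : x = ((r : Fin n) : ℤ) + (n : ℤ) * (x / n) := by
        rw [hr, res_coe]
        have := Int.emod_add_mul_ediv x (n : ℤ)
        linarith
      calc f x = f (((r : Fin n) : ℤ) + (n : ℤ) * (x / n)) := by rw [← hx]
        _ = f ((r : Fin n) : ℤ) + (n : ℤ) * (x / n) := translate f hf' _ _
        _ = f ((r : Fin n) : ℤ) + (x - ((r : Fin n) : ℤ)) := by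
            rw [hr, res_coe]
            have := Int.emod_add_mul_ediv x (n : ℤ)
            linarith
    rw [F, ← hr, toAdd_ofAdd, key1, key2]
    ring
  exact ⟨(MulEquiv.ofBijective Φ ⟨hinj, hsurj⟩).symm⟩
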